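/- (Sachs) Let B and C be (nontrivial) Boolean algebras and let φ : Sub(B) → Sub(C) be a lattice isomorphism. Then there is a Boolean algebra isomorphism φ* : B → C such that φ(x) = φ*[x] (the image of x under φ*) for every subalgebra x of B. Moreover, if B does not have exactly four elements, then the isomorphism φ* with this property is unique. -/

import Mathlib

variable {β : Type*} [BooleanAlgebra β]

/-- A subalgebra of a Boolean algebra: contains `⊥,⊤`, closed under `⊓`, `⊔`, `ᶜ`. -/
def IsBASub (s : Set β) : Prop :=
  ⊥ ∈ s ∧ ⊤ ∈ s ∧ (∀ a ∈ s, ∀ b ∈ s, a ⊓ b ∈ s) ∧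
    (∀ a ∈ s, ∀ b ∈ s, a ⊔ b ∈ s) ∧ ∀ a ∈ s, aᶜ ∈ s

/-- A dual subalgebra: the union of an ideal and its complementary filter. -/
def IsDualSub (s : Set β) : Prop :=
  ∃ I : Set β, I.Nonempty ∧ (∀ a ∈ I, ∀ b, b ≤ a → b ∈ I) ∧
    (∀ a ∈ I, ∀ b ∈ I, a ⊔ b ∈ I) ∧ s = I ∪ (fun a => aᶜ) '' I

/-- The subalgebra of a Boolean algebra generated by a set. -/
def baGen (s : Set β) : Set β := ⋂₀ {t : Set β | IsBASub t ∧ s ⊆ t}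

/-- An atom of the lattice `Sub(B)` of subalgebras of a Boolean algebra: a subalgebra
that is minimal among subalgebras distinct from the least subalgebra `{⊥, ⊤}`. -/
def IsBAAtomSub (y : Set β) : Prop :=
  IsBASub y ∧ y ≠ {⊥, ⊤} ∧ ∀ z : Set β, IsBASub z → z ≠ {⊥, ⊤} → z ⊆ y → z = y

/-- The lattice `Sub(B)` of subalgebras of a Boolean algebra, ordered by inclusion. -/
abbrev BASub (β : Type*) [BooleanAlgebra β] := {s : Set β // IsBASub s}

namespace SachsAux

section Basic

variable {α : Type*} [BooleanAlgebra α]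

/-- nontrivial element -/
def Nt (x : α) : Prop := x ≠ ⊥ ∧ x ≠ ⊤

lemma Nt.compl {x : α} (h : Nt x) : Nt xᶜ := by
  constructor
  · simp [compl_eq_bot]; exact h.2
  · simp [compl_eq_top]; exact h.1

lemma isBASub_pair : IsBASub ({⊥, ⊤} : Set α) := by
  refine ⟨by simp, by simp, ?_, ?_, ?_⟩ <;>
  · intro a ha
    first
    | (intro b hb; rcases ha with rfl|rfl <;> rcases hb with rfl|rfl <;> simp)
    | (rcases ha with rfl|rfl <;> simp)

lemma isBASub_univ : IsBASub (Set.univ : Set α) := by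
  refine ⟨trivial, trivial, ?_, ?_, ?_⟩ <;> intros <;> trivial

lemma isBASub_atS (x : α) : IsBASub ({⊥, ⊤, x, xᶜ} : Set α) := by
  refine ⟨by simp, by simp, ?_, ?_, ?_⟩ <;>
  · intro a ha
    first
    | (intro b hb
       rcases ha with rfl|rfl|rfl|rfl <;> rcases hb with rfl|rfl|rfl|rfl <;> simp)
    | (rcases ha with rfl|rfl|rfl|rfl <;> simp)

lemma isBASub_dS (c : α) : IsBASub ({y : α | y ≤ c ∨ cᶜ ≤ y}) := by
  refine ⟨Or.inl bot_le, Or.inr le_top, ?_, ?_, ?_⟩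
  · rintro a (ha|ha) b (hb|hb)
    · exact Or.inl (le_trans inf_le_left ha)
    · exact Or.inl (le_trans inf_le_left ha)
    · exact Or.inl (le_trans inf_le_right hb)
    · exact Or.inr (le_inf ha hb)
  · rintro a (ha|ha) b (hb|hb)
    · exact Or.inl (sup_le ha hb)
    · exact Or.inr (le_trans hb le_sup_right)
    · exact Or.inr (le_trans ha le_sup_left)
    · exact Or.inr (le_trans ha le_sup_left)
  · rintro a (ha|ha)
    · exact Or.inr (compl_le_compl ha)
    · exact Or.inl (compl_le_of_compl_le ha)

lemma isBASub_baGen (s : Set α) : IsBASub (baGen s) := by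
  constructor
  · intro t ht; exact ht.1.1
  refine ⟨fun t ht => ht.1.2.1, ?_, ?_, ?_⟩
  · intro a ha b hb t ht
    exact ht.1.2.2.1 a (ha t ht) b (hb t ht)
  · intro a ha b hb t ht
    exact ht.1.2.2.2.1 a (ha t ht) b (hb t ht)
  · intro a ha t ht
    exact ht.1.2.2.2.2 a (ha t ht)

lemma subset_baGen (s : Set α) : s ⊆ baGen s := by
  intro x hx t ht; exact ht.2 hx

lemma baGen_le {s t : Set α} (ht : IsBASub t) (h : s ⊆ t) : baGen s ⊆ t := by
  intro x hx; exact hx t ⟨ht, h⟩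

/-- the atom subalgebra `{⊥,⊤,x,xᶜ}` -/
def atS (x : α) : BASub α := ⟨{⊥, ⊤, x, xᶜ}, isBASub_atS x⟩

/-- the principal dual subalgebra `↓x ∪ ↑xᶜ` -/
def dS (c : α) : BASub α := ⟨{y : α | y ≤ c ∨ cᶜ ≤ y}, isBASub_dS c⟩

/-- the least subalgebra -/
def botS : BASub α := ⟨{⊥, ⊤}, isBASub_pair⟩

/-- the subalgebra generated by a set -/
def genS (s : Set α) : BASub α := ⟨baGen s, isBASub_baGen s⟩

lemma le_iff {T U : BASub α} : T ≤ U ↔ ∀ z ∈ (T : Set α), z ∈ (U : Set α) :=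
  Iff.rfl

lemma botS_le (T : BASub α) : botS ≤ T := by
  intro z hz
  rcases hz with rfl|rfl
  · exact T.2.1
  · exact T.2.2.1

lemma mem_dS {y c : α} : y ∈ (dS c : Set α) ↔ y ≤ c ∨ cᶜ ≤ y := Iff.rfl

lemma atS_le_iff {x : α} {T : BASub α} : atS x ≤ T ↔ x ∈ (T : Set α) := by
  constructor
  · intro h; exact h (by simp [atS])
  · intro hx z hz
    rcases hz with rfl|rfl|rfl|rfl
    · exact T.2.1
    · exact T.2.2.1
    · exact hx
    · exact T.2.2.2.2.2 x hx

lemma atS_compl (x : α) : atS xᶜ = atS x := by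
  apply Subtype.ext
  simp only [atS, compl_compl]
  ext z; simp; tauto

lemma mem_atS_iff {z x : α} : z ∈ (atS x : Set α) ↔ z = ⊥ ∨ z = ⊤ ∨ z = x ∨ z = xᶜ := by
  simp [atS]

lemma atS_eq_iff {x y : α} (hy : Nt y) : atS x = atS y ↔ y = x ∨ y = xᶜ := by
  constructor
  · intro h
    have hm : y ∈ (atS x : Set α) := by rw [h]; simp [atS]
    rcases mem_atS_iff.1 hm with h1|h1|h1|h1
    · exact absurd h1 hy.1
    · exact absurd h1 hy.2
    · exact Or.inl h1
    · exact Or.inr h1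
  · rintro (rfl|rfl)
    · rfl
    · exact (atS_compl x).symm

/-- order-atoms of `BASub` -/
def AtomS (T : BASub α) : Prop :=
  T ≠ botS ∧ ∀ z : BASub α, z ≠ botS → z ≤ T → z = T

lemma atS_ne_botS {x : α} (hx : Nt x) : atS x ≠ botS := by
  intro h
  have hm : x ∈ (botS : BASub α).1 := by
    rw [← h]; exact (by simp [atS] : x ∈ (atS x : Set α))
  rcases hm with h1|h1
  · exact hx.1 h1
  · exact hx.2 h1

lemma exists_nt_of_ne_botS {T : BASub α} (h : T ≠ botS) :
    ∃ x, Nt x ∧ x ∈ (T : Set α) := by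
  by_contra hc
  push_neg at hc
  apply h
  apply Subtype.ext
  apply Set.eq_of_subset_of_subset
  · intro z hz
    by_cases h1 : z = ⊥
    · simp [botS, h1]
    by_cases h2 : z = ⊤
    · simp [botS, h2]
    · exact absurd hz (hc z ⟨h1, h2⟩)
  · exact botS_le T

lemma atomS_iff {T : BASub α} : AtomS T ↔ ∃ x, Nt x ∧ T = atS x := by
  constructor
  · intro ⟨h1, h2⟩
    obtain ⟨x, hx, hxT⟩ := exists_nt_of_ne_botS h1
    refine ⟨x, hx, ?_⟩
    exact (h2 (atS x) (atS_ne_botS hx) (atS_le_iff.2 hxT)).symm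
  · rintro ⟨x, hx, rfl⟩
    refine ⟨atS_ne_botS hx, fun z hz hle => ?_⟩
    obtain ⟨y, hy, hyz⟩ := exists_nt_of_ne_botS hz
    have hym : y ∈ (atS x : Set α) := hle hyz
    have : atS x = atS y := by
      rcases mem_atS_iff.1 hym with h|h|h|h
      · exact absurd h hy.1
      · exact absurd h hy.2
      · rw [h]
      · rw [h, atS_compl]
    exact le_antisymm hle (by rw [this]; exact atS_le_iff.2 hyz)

lemma le_compl_of_inf_eq_bot {w a : α} (h : w ⊓ a = ⊥) : a ≤ wᶜ := by
  have h2 : a ⊓ w = ⊥ := by rwa [inf_comm]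
  calc a = a ⊓ (w ⊔ wᶜ) := by simp
  _ = (a ⊓ w) ⊔ (a ⊓ wᶜ) := inf_sup_left a w wᶜ
  _ = a ⊓ wᶜ := by rw [h2, bot_sup_eq]
  _ ≤ wᶜ := inf_le_right

lemma inf_compl_eq_bot_of_le {a w : α} (h : a ≤ w) : wᶜ ⊓ a = ⊥ := by
  have : wᶜ ⊓ a ≤ wᶜ ⊓ w := inf_le_inf_left _ h
  simpa using le_bot_iff.1 (le_trans this (by simp))

lemma eq_bot_of_le_compl {a : α} (h : a ≤ aᶜ) : a = ⊥ := by
  apply le_bot_iff.1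
  calc a = a ⊓ a := (inf_idem a).symm
  _ ≤ a ⊓ aᶜ := inf_le_inf_left a h
  _ = ⊥ := inf_compl_eq_bot

/-- comparability relation between (the pairs of) two elements -/
def rel (x y : α) : Prop := x ≤ y ∨ y ≤ x ∨ x ≤ yᶜ ∨ yᶜ ≤ x

lemma rel_self (x : α) : rel x x := Or.inl le_rfl

lemma rel_compl_self (x : α) : rel x xᶜ := Or.inr (Or.inr (Or.inl (by rw [compl_compl])))

lemma rel_comm {x y : α} : rel x y ↔ rel y x := by
  unfold rel
  constructor <;>
  · rintro (h|h|h|h)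
    · exact Or.inr (Or.inl h)
    · exact Or.inl h
    · exact Or.inr (Or.inr (Or.inl (le_compl_comm.1 h)))
    · exact Or.inr (Or.inr (Or.inr (compl_le_iff_compl_le.2 h)))

lemma rel_compl_right {x y : α} : rel x yᶜ ↔ rel x y := by
  unfold rel
  rw [compl_compl]
  tauto

lemma rel_compl_left {x y : α} : rel xᶜ y ↔ rel x y := by
  rw [rel_comm, rel_compl_right, rel_comm]

lemma atS_ne_of_not_rel {x y : α} (h : ¬ rel x y) : atS x ≠ atS y := by
  intro he
  by_cases hy : Nt y
  · rcases (atS_eq_iff hy).1 he with rfl|rfl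
    · exact h (rel_self _)
    · exact h (rel_compl_self _)
  · apply h
    rcases not_and_or.1 hy with hy|hy
    · push_neg at hy
      exact Or.inr (Or.inl (by rw [hy]; exact bot_le))
    · push_neg at hy
      exact Or.inl (by rw [hy]; exact le_top)

lemma mem_genS_of {x : α} {s : Set α} (h : x ∈ s) : x ∈ (genS s : Set α) :=
  subset_baGen s h

lemma genS_le_iff {s : Set α} {T : BASub α} : genS s ≤ T ↔ s ⊆ (T : Set α) :=
  ⟨fun h => le_trans (subset_baGen s) h, fun h => baGen_le T.2 h⟩

lemma atS_le_genS {x : α} {s : Set α} (h : x ∈ s) : atS x ≤ genS s :=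
  atS_le_iff.2 (mem_genS_of h)

lemma genS_pair_comm (x y : α) : genS ({x, y} : Set α) = genS {y, x} := by
  rw [Set.pair_comm]

lemma genS_pair_compl_right (x y : α) : genS ({x, yᶜ} : Set α) = genS {x, y} := by
  apply Subtype.ext
  apply Set.eq_of_subset_of_subset
  · apply baGen_le (isBASub_baGen _)
    rintro z (rfl|rfl)
    · exact mem_genS_of (by simp)
    · exact (isBASub_baGen _).2.2.2.2 y (mem_genS_of (by simp))
  · apply baGen_le (isBASub_baGen _)
    rintro z (rfl|hz)
    · exact mem_genS_of (by simp)
    · rw [hz]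
      have h1 : yᶜ ∈ baGen ({x, yᶜ} : Set α) := subset_baGen _ (by simp)
      have h2 := (isBASub_baGen ({x, yᶜ} : Set α)).2.2.2.2 yᶜ h1
      rwa [compl_compl] at h2

lemma isLUB_genS_pair (x y : α) : IsLUB {atS x, atS y} (genS ({x, y} : Set α)) := by
  constructor
  · rintro T (rfl|rfl)
    · exact atS_le_genS (by simp)
    · exact atS_le_genS (by simp)
  · intro U hU
    rw [genS_le_iff]
    rintro z (rfl|rfl)
    · exact atS_le_iff.1 (hU (by simp))
    · exact atS_le_iff.1 (hU (by simp))

lemma isLUB_genS_triple (x q y : α) :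
    IsLUB {atS x, atS q, atS y} (genS ({x, q, y} : Set α)) := by
  constructor
  · rintro T (rfl|rfl|rfl)
    · exact atS_le_genS (by simp)
    · exact atS_le_genS (by simp)
    · exact atS_le_genS (by simp)
  · intro U hU
    rw [genS_le_iff]
    rintro z (rfl|rfl|rfl)
    · exact atS_le_iff.1 (hU (by simp))
    · exact atS_le_iff.1 (hU (by simp))
    · exact atS_le_iff.1 (hU (by simp))

/-- the "no element splits a,b,c" subalgebra -/
lemma isBASub_splitE (a b c : α) :
    IsBASub {w : α | (w ⊓ a = ⊥ ∨ w ⊓ a = a) ∧ (w ⊓ b = ⊥ ∨ w ⊓ b = b) ∧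
      (w ⊓ c = ⊥ ∨ w ⊓ c = c)} := by
  have hmeet : ∀ u : α, ∀ w1 w2 : α, (w1 ⊓ u = ⊥ ∨ w1 ⊓ u = u) → (w2 ⊓ u = ⊥ ∨ w2 ⊓ u = u) →
      (w1 ⊓ w2 ⊓ u = ⊥ ∨ w1 ⊓ w2 ⊓ u = u) := by
    rintro u w1 w2 (h1|h1) (h2|h2)
    all_goals first
      | (left
         apply le_bot_iff.1
         calc w1 ⊓ w2 ⊓ u ≤ w1 ⊓ u := by
                apply le_inf (le_trans inf_le_left inf_le_left) inf_le_right
         _ = ⊥ := h1)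
      | (left
         apply le_bot_iff.1
         calc w1 ⊓ w2 ⊓ u ≤ w2 ⊓ u := by
                apply le_inf (le_trans inf_le_left inf_le_right) inf_le_right
         _ = ⊥ := h2)
      | (right
         have hu1 : u ≤ w1 := inf_eq_right.1 h1
         have hu2 : u ≤ w2 := inf_eq_right.1 h2
         exact inf_eq_right.2 (le_inf hu1 hu2))
  have hjoin : ∀ u : α, ∀ w1 w2 : α, (w1 ⊓ u = ⊥ ∨ w1 ⊓ u = u) → (w2 ⊓ u = ⊥ ∨ w2 ⊓ u = u) →
      ((w1 ⊔ w2) ⊓ u = ⊥ ∨ (w1 ⊔ w2) ⊓ u = u) := by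
    rintro u w1 w2 h1 h2
    rw [inf_sup_right]
    rcases h1 with h1|h1 <;> rcases h2 with h2|h2 <;> rw [h1, h2] <;> simp
  have hcompl : ∀ u : α, ∀ w : α, (w ⊓ u = ⊥ ∨ w ⊓ u = u) →
      (wᶜ ⊓ u = ⊥ ∨ wᶜ ⊓ u = u) := by
    rintro u w (h|h)
    · right
      rw [inf_comm] at h
      exact inf_eq_right.2 (le_compl_of_inf_eq_bot (by rwa [inf_comm]))
    · left
      exact inf_compl_eq_bot_of_le (inf_eq_right.1 h)
  refine ⟨⟨by simp, by simp, by simp⟩, ⟨by simp, by simp, by simp⟩, ?_, ?_, ?_⟩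
  · intro w1 h1 w2 h2
    exact ⟨hmeet a w1 w2 h1.1 h2.1, hmeet b w1 w2 h1.2.1 h2.2.1, hmeet c w1 w2 h1.2.2 h2.2.2⟩
  · intro w1 h1 w2 h2
    exact ⟨hjoin a w1 w2 h1.1 h2.1, hjoin b w1 w2 h1.2.1 h2.2.1, hjoin c w1 w2 h1.2.2 h2.2.2⟩
  · intro w h
    exact ⟨hcompl a w h.1, hcompl b w h.2.1, hcompl c w h.2.2⟩

/-- lattice-expressed comparability: no 4 distinct atoms below the join -/
def compLat (x y : α) : Prop := ¬ ∃ T₁ T₂ T₃ T₄ : BASub α,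
  (AtomS T₁ ∧ AtomS T₂ ∧ AtomS T₃ ∧ AtomS T₄) ∧
  (T₁ ≤ genS {x, y} ∧ T₂ ≤ genS {x, y} ∧ T₃ ≤ genS {x, y} ∧ T₄ ≤ genS {x, y}) ∧
  (T₁ ≠ T₂ ∧ T₁ ≠ T₃ ∧ T₁ ≠ T₄ ∧ T₂ ≠ T₃ ∧ T₂ ≠ T₄ ∧ T₃ ≠ T₄)

lemma four_in_three {X : Type*} {a b c t1 t2 t3 t4 : X}
    (h1 : t1 = a ∨ t1 = b ∨ t1 = c) (h2 : t2 = a ∨ t2 = b ∨ t2 = c)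
    (h3 : t3 = a ∨ t3 = b ∨ t3 = c) (h4 : t4 = a ∨ t4 = b ∨ t4 = c)
    (n12 : t1 ≠ t2) (n13 : t1 ≠ t3) (n14 : t1 ≠ t4)
    (n23 : t2 ≠ t3) (n24 : t2 ≠ t4) (n34 : t3 ≠ t4) : False := by
  rcases h1 with rfl|rfl|rfl <;> rcases h2 with h2|h2|h2 <;>
    rcases h3 with h3|h3|h3 <;> rcases h4 with h4|h4|h4 <;> simp_all

lemma splitE_atS {x y w : α} (hxy : x ≤ y) (hnt : Nt w)
    (h : (w ⊓ x = ⊥ ∨ w ⊓ x = x) ∧ (w ⊓ (xᶜ ⊓ y) = ⊥ ∨ w ⊓ (xᶜ ⊓ y) = xᶜ ⊓ y) ∧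
      (w ⊓ yᶜ = ⊥ ∨ w ⊓ yᶜ = yᶜ)) :
    atS w = atS x ∨ atS w = atS y ∨ atS w = atS (xᶜ ⊓ y) := by
  have hcover : x ⊔ (xᶜ ⊓ y) ⊔ yᶜ = ⊤ := by
    rw [sup_inf_left, sup_compl_eq_top, top_inf_eq]
    rw [sup_assoc, sup_compl_eq_top, sup_top_eq]
  have hdec : w = (w ⊓ x) ⊔ (w ⊓ (xᶜ ⊓ y)) ⊔ (w ⊓ yᶜ) := by
    conv_lhs => rw [← inf_top_eq w, ← hcover]
    rw [inf_sup_left, inf_sup_left]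
  have hxy' : x ⊔ (xᶜ ⊓ y) = y := by
    rw [sup_inf_left, sup_compl_eq_top, top_inf_eq, sup_eq_right.2 hxy]
  obtain ⟨ha, hb, hc⟩ := h
  rcases ha with ha|ha <;> rcases hb with hb|hb <;> rcases hc with hc|hc <;>
    rw [ha, hb, hc] at hdec <;>
    try simp only [bot_sup_eq, sup_bot_eq] at hdec
  · exact absurd hdec hnt.1
  · rw [hdec, atS_compl]; tauto
  · rw [hdec]; tauto
  · have h2 : (xᶜ ⊓ y) ⊔ yᶜ = xᶜ := by
      rw [sup_comm, sup_inf_left, compl_sup_eq_top, inf_top_eq]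
      exact sup_eq_right.2 (compl_le_compl hxy)
    rw [hdec, h2, atS_compl]; tauto
  · rw [hdec]; tauto
  · have h2 : x ⊔ yᶜ = (xᶜ ⊓ y)ᶜ := by rw [compl_inf, compl_compl]
    rw [hdec, h2, atS_compl]; tauto
  · rw [hdec, hxy']; tauto
  · exfalso
    apply hnt.2
    rw [hdec, hxy', sup_compl_eq_top]

lemma genS_pair_subset_splitE {x y : α} (hxy : x ≤ y) :
    (genS ({x, y} : Set α) : Set α) ⊆
      {w : α | (w ⊓ x = ⊥ ∨ w ⊓ x = x) ∧ (w ⊓ (xᶜ ⊓ y) = ⊥ ∨ w ⊓ (xᶜ ⊓ y) = xᶜ ⊓ y) ∧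
        (w ⊓ yᶜ = ⊥ ∨ w ⊓ yᶜ = yᶜ)} := by
  apply baGen_le (isBASub_splitE x (xᶜ ⊓ y) yᶜ)
  rintro z (rfl|hz)
  · refine ⟨Or.inr (inf_idem z), Or.inl ?_, Or.inl ?_⟩
    · rw [← inf_assoc, inf_compl_eq_bot, bot_inf_eq]
    · rw [inf_comm]; exact inf_compl_eq_bot_of_le hxy
  · rw [hz]
    refine ⟨Or.inr (inf_eq_right.2 hxy), Or.inr (inf_eq_right.2 inf_le_right),
      Or.inl inf_compl_eq_bot⟩

lemma compLat_core {x y : α} (hxy : x ≤ y) : compLat x y := by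
  rintro ⟨T1, T2, T3, T4, ⟨a1, a2, a3, a4⟩, ⟨l1, l2, l3, l4⟩, n12, n13, n14, n23, n24, n34⟩
  obtain ⟨w1, hw1, rfl⟩ := atomS_iff.1 a1
  obtain ⟨w2, hw2, rfl⟩ := atomS_iff.1 a2
  obtain ⟨w3, hw3, rfl⟩ := atomS_iff.1 a3
  obtain ⟨w4, hw4, rfl⟩ := atomS_iff.1 a4
  have h1 := splitE_atS hxy hw1 (genS_pair_subset_splitE hxy (atS_le_iff.1 l1))
  have h2 := splitE_atS hxy hw2 (genS_pair_subset_splitE hxy (atS_le_iff.1 l2))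
  have h3 := splitE_atS hxy hw3 (genS_pair_subset_splitE hxy (atS_le_iff.1 l3))
  have h4 := splitE_atS hxy hw4 (genS_pair_subset_splitE hxy (atS_le_iff.1 l4))
  exact four_in_three h1 h2 h3 h4 n12 n13 n14 n23 n24 n34

lemma compLat_comm {x y : α} : compLat x y ↔ compLat y x := by
  unfold compLat
  rw [genS_pair_comm]

lemma compLat_compl_right {x y : α} : compLat x yᶜ ↔ compLat x y := by
  unfold compLat
  rw [genS_pair_compl_right]

lemma compLat_compl_left {x y : α} : compLat xᶜ y ↔ compLat x y := by
  rw [compLat_comm, compLat_compl_right, compLat_comm]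

lemma compLat_of_rel {x y : α} (hx : Nt x) (hy : Nt y) (h : rel x y) : compLat x y := by
  rcases h with h|h|h|h
  · exact compLat_core h
  · exact compLat_comm.2 (compLat_core h)
  · exact compLat_compl_right.1 (compLat_core h)
  · exact compLat_compl_right.1 (compLat_comm.2 (compLat_core h))

lemma rel_of_compLat {x y : α} (hx : Nt x) (hy : Nt y) (hne : atS x ≠ atS y)
    (h : compLat x y) : rel x y := by
  by_contra hrel
  apply h
  unfold rel at hrel
  push_neg at hrel
  obtain ⟨r1, r2, r3, r4⟩ := hrel
  have hm : Nt (x ⊓ y) := by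
    constructor
    · intro hb
      exact r3 (le_compl_of_inf_eq_bot (by rwa [inf_comm]))
    · intro ht
      exact hx.2 (top_le_iff.1 (le_trans (le_of_eq ht.symm) inf_le_left))
  have hj : Nt (x ⊔ y) := by
    constructor
    · intro hb
      exact hx.1 (le_bot_iff.1 (le_trans le_sup_left (le_of_eq hb)))
    · intro ht
      apply r4
      calc yᶜ = yᶜ ⊓ (x ⊔ y) := by rw [ht, inf_top_eq]
      _ = (yᶜ ⊓ x) ⊔ (yᶜ ⊓ y) := inf_sup_left yᶜ x y
      _ = yᶜ ⊓ x := by rw [compl_inf_eq_bot, sup_bot_eq]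
      _ ≤ x := inf_le_right
  have hxg : x ∈ baGen ({x, y} : Set α) := subset_baGen _ (by simp)
  have hyg : y ∈ baGen ({x, y} : Set α) := subset_baGen _ (by simp)
  refine ⟨atS x, atS y, atS (x ⊓ y), atS (x ⊔ y),
    ⟨atomS_iff.2 ⟨x, hx, rfl⟩, atomS_iff.2 ⟨y, hy, rfl⟩,
     atomS_iff.2 ⟨x ⊓ y, hm, rfl⟩, atomS_iff.2 ⟨x ⊔ y, hj, rfl⟩⟩,
    ⟨atS_le_iff.2 hxg, atS_le_iff.2 hyg,
     atS_le_iff.2 ((isBASub_baGen _).2.2.1 x hxg y hyg),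
     atS_le_iff.2 ((isBASub_baGen _).2.2.2.1 x hxg y hyg)⟩,
    hne, ?_, ?_, ?_, ?_, ?_⟩
  · intro he
    rcases (atS_eq_iff hm).1 he with h1|h1
    · exact r1 (inf_eq_left.1 h1)
    · apply hx.2
      rw [← compl_eq_bot, ← h1]
      apply eq_bot_of_le_compl
      rw [h1, compl_compl, ← h1]
      exact inf_le_left
  · intro he
    rcases (atS_eq_iff hj).1 he with h1|h1
    · exact r2 (sup_eq_left.1 h1)
    · exact hx.1 (eq_bot_of_le_compl (h1 ▸ le_sup_left))
  · intro he
    rcases (atS_eq_iff hm).1 he with h1|h1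
    · exact r2 (inf_eq_right.1 h1)
    · apply hy.2
      rw [← compl_eq_bot, ← h1]
      apply eq_bot_of_le_compl
      rw [h1, compl_compl, ← h1]
      exact inf_le_right
  · intro he
    rcases (atS_eq_iff hj).1 he with h1|h1
    · exact r1 (sup_eq_right.1 h1)
    · exact hy.1 (eq_bot_of_le_compl (h1 ▸ le_sup_right))
  · intro he
    rcases (atS_eq_iff hj).1 he with h1|h1
    · exact r1 (le_trans (h1 ▸ le_sup_left) inf_le_right)
    · apply hm.1
      apply eq_bot_of_le_compl
      rw [← h1]
      exact le_trans inf_le_left le_sup_left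

lemma genS_eq_of_double_subset {s t : Set α} (hs : s ⊆ (genS t : Set α))
    (ht : t ⊆ (genS s : Set α)) : genS s = genS t := by
  apply Subtype.ext
  exact Set.eq_of_subset_of_subset (baGen_le (isBASub_baGen t) hs) (baGen_le (isBASub_baGen s) ht)

lemma compl_mem_genS {x : α} {s : Set α} (h : x ∈ (genS s : Set α)) :
    xᶜ ∈ (genS s : Set α) := (isBASub_baGen s).2.2.2.2 x h

lemma genS3_compl_left (x q y : α) : genS ({xᶜ, q, y} : Set α) = genS {x, q, y} := by
  apply genS_eq_of_double_subset
  · rintro z (rfl|rfl|rfl)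
    · exact compl_mem_genS (mem_genS_of (by simp))
    · exact mem_genS_of (by simp)
    · exact mem_genS_of (by simp)
  · rintro z (hz|rfl|rfl)
    · rw [hz]
      have := compl_mem_genS (mem_genS_of (show xᶜ ∈ ({xᶜ, q, y} : Set α) by simp))
      rwa [compl_compl] at this
    · exact mem_genS_of (by simp)
    · exact mem_genS_of (by simp)

lemma genS3_compl_mid (x q y : α) : genS ({x, qᶜ, y} : Set α) = genS {x, q, y} := by
  apply genS_eq_of_double_subset
  · rintro z (rfl|rfl|rfl)
    · exact mem_genS_of (by simp)
    · exact compl_mem_genS (mem_genS_of (by simp))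
    · exact mem_genS_of (by simp)
  · rintro z (rfl|hz|rfl)
    · exact mem_genS_of (by simp)
    · rw [hz]
      have := compl_mem_genS (mem_genS_of (show qᶜ ∈ ({x, qᶜ, y} : Set α) by simp))
      rwa [compl_compl] at this
    · exact mem_genS_of (by simp)

lemma genS3_compl_right (x q y : α) : genS ({x, q, yᶜ} : Set α) = genS {x, q, y} := by
  apply genS_eq_of_double_subset
  · rintro z (rfl|rfl|rfl)
    · exact mem_genS_of (by simp)
    · exact mem_genS_of (by simp)
    · exact compl_mem_genS (mem_genS_of (by simp))
  · rintro z (rfl|rfl|hz)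
    · exact mem_genS_of (by simp)
    · exact mem_genS_of (by simp)
    · rw [hz]
      have := compl_mem_genS (mem_genS_of (show yᶜ ∈ ({x, q, yᶜ} : Set α) by simp))
      rwa [compl_compl] at this

/-- the lattice-expressed "middle of a chainable triple" predicate -/
def MidLat (q x y : α) : Prop :=
  ∃ w, Nt w ∧ w ∈ (genS ({x, q, y} : Set α) : Set α) ∧ ¬ rel w q

lemma midLat_compl_left {q x y : α} : MidLat q xᶜ y ↔ MidLat q x y := by
  unfold MidLat; rw [genS3_compl_left]

lemma midLat_compl_right {q x y : α} : MidLat q x yᶜ ↔ MidLat q x y := by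
  unfold MidLat; rw [genS3_compl_right]

lemma midLat_compl_mid {q x y : α} : MidLat qᶜ x y ↔ MidLat q x y := by
  unfold MidLat
  rw [genS3_compl_mid]
  constructor <;> rintro ⟨w, h1, h2, h3⟩ <;> refine ⟨w, h1, h2, ?_⟩
  · rwa [rel_compl_right] at h3
  · rwa [rel_compl_right]

lemma midLat_of_chain {u q v : α} (h1 : u < q) (h2 : q < v) (hu : Nt u) (hq : Nt q)
    (hv : Nt v) : MidLat q u v := by
  have huv : u ≤ v := h1.le.trans h2.le
  refine ⟨u ⊔ (qᶜ ⊓ v), ⟨?_, ?_⟩, ?_, ?_⟩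
  · intro hb
    exact hu.1 (le_bot_iff.1 (le_sup_left.trans (le_of_eq hb)))
  · intro ht
    have : u ⊔ (qᶜ ⊓ v) ≤ v := sup_le huv inf_le_right
    exact hv.2 (top_le_iff.1 (ht ▸ this))
  · have hmu : u ∈ (genS ({u, q, v} : Set α) : Set α) := mem_genS_of (by simp)
    have hmq : q ∈ (genS ({u, q, v} : Set α) : Set α) := mem_genS_of (by simp)
    have hmv : v ∈ (genS ({u, q, v} : Set α) : Set α) := mem_genS_of (by simp)
    exact (isBASub_baGen _).2.2.2.1 u hmu (qᶜ ⊓ v)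
      ((isBASub_baGen _).2.2.1 qᶜ (compl_mem_genS hmq) v hmv)
  · rintro (h|h|h|h)
    · have hle : qᶜ ⊓ v ≤ q := le_sup_right.trans h
      have hle2 : qᶜ ⊓ v ≤ qᶜ := inf_le_left
      have : qᶜ ⊓ v = ⊥ := le_bot_iff.1 (by
        calc qᶜ ⊓ v ≤ q ⊓ qᶜ := le_inf hle hle2
        _ = ⊥ := inf_compl_eq_bot)
      have : v ≤ q := by
        have h3 := le_compl_of_inf_eq_bot (show qᶜ ⊓ v = ⊥ from this)
        rwa [compl_compl] at h3
      exact h2.not_ge this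
    · apply h1.ne'
      have hqw : q ⊓ (u ⊔ (qᶜ ⊓ v)) = q := inf_eq_left.2 h
      calc q = q ⊓ (u ⊔ (qᶜ ⊓ v)) := hqw.symm
      _ = (q ⊓ u) ⊔ (q ⊓ (qᶜ ⊓ v)) := inf_sup_left q _ _
      _ = u ⊔ (q ⊓ qᶜ ⊓ v) := by rw [inf_eq_right.2 h1.le, inf_assoc]
      _ = u := by rw [inf_compl_eq_bot, bot_inf_eq, sup_bot_eq]
    · apply hu.1
      apply le_bot_iff.1
      calc u ≤ q ⊓ qᶜ := le_inf h1.le (le_sup_left.trans h)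
      _ = ⊥ := inf_compl_eq_bot
    · apply hv.2
      rw [← compl_eq_bot]
      apply le_bot_iff.1
      have hwc : (u ⊔ (qᶜ ⊓ v))ᶜ ≤ q := by
        have := compl_le_compl h
        rwa [compl_compl] at this
      have hvw : vᶜ ≤ (u ⊔ (qᶜ ⊓ v))ᶜ := by
        apply compl_le_compl
        exact sup_le huv inf_le_right
      calc vᶜ ≤ q ⊓ qᶜ := le_inf (hvw.trans hwc) (compl_le_compl h2.le)
      _ = ⊥ := inf_compl_eq_bot

lemma not_midLat_of_below {u v q : α} (hu_le : u ≤ q) (hv_le : v ≤ q) : ¬ MidLat q u v := by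
  rintro ⟨w, hw, hmem, hnrel⟩
  have hsub : (genS ({u, q, v} : Set α) : Set α) ⊆
      {z : α | (z ⊓ qᶜ = ⊥ ∨ z ⊓ qᶜ = qᶜ) ∧ (z ⊓ (⊥ : α) = ⊥ ∨ z ⊓ ⊥ = ⊥) ∧
        (z ⊓ (⊥ : α) = ⊥ ∨ z ⊓ ⊥ = ⊥)} := by
    apply baGen_le (isBASub_splitE qᶜ ⊥ ⊥)
    rintro z (rfl|rfl|rfl)
    · refine ⟨Or.inl ?_, by simp, by simp⟩
      rw [inf_comm]; exact inf_compl_eq_bot_of_le hu_le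
    · exact ⟨Or.inl inf_compl_eq_bot, by simp, by simp⟩
    · refine ⟨Or.inl ?_, by simp, by simp⟩
      rw [inf_comm]; exact inf_compl_eq_bot_of_le hv_le
  rcases (hsub hmem).1 with h|h
  · apply hnrel
    left
    have h3 := le_compl_of_inf_eq_bot h
    exact compl_le_compl_iff_le.1 h3
  · exact hnrel (Or.inr (Or.inr (Or.inr (inf_eq_right.1 h))))

lemma atS_le_dS {x c : α} : atS x ≤ dS c ↔ x ≤ c ∨ xᶜ ≤ c := by
  rw [atS_le_iff]
  show x ≤ c ∨ cᶜ ≤ x ↔ _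
  constructor <;> rintro (h|h)
  · exact Or.inl h
  · exact Or.inr (compl_le_iff_compl_le.2 h)
  · exact Or.inl h
  · exact Or.inr (compl_le_iff_compl_le.1 h)

lemma atS_le_dS_self (a : α) : atS a ≤ dS a := atS_le_dS.2 (Or.inl le_rfl)

lemma atS_eq_of_le_both_dS {x c : α} (hx : Nt x) (hc : Nt c)
    (h1 : atS x ≤ dS c) (h2 : atS x ≤ dS cᶜ) : atS x = atS c := by
  rw [atS_le_dS] at h1
  rw [atS_le_dS] at h2
  rcases h1 with h1|h1 <;> rcases h2 with h2|h2
  · exact absurd (le_bot_iff.1 ((le_inf h1 h2).trans (le_of_eq inf_compl_eq_bot))) hx.1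
  · have : x = c := le_antisymm h1 (compl_le_compl_iff_le.1 h2)
    rw [this]
  · have : x = cᶜ := le_antisymm h2 (compl_le_iff_compl_le.1 h1)
    rw [this, atS_compl]
  · exfalso
    apply hx.2
    rw [← compl_eq_bot]
    exact le_bot_iff.1 ((le_inf h1 h2).trans (le_of_eq inf_compl_eq_bot))

end Basic

section Transfer

variable {α : Type*} [BooleanAlgebra α] {α' : Type*} [BooleanAlgebra α']
variable (ψ : BASub α ≃o BASub α')

lemma map_botS : ψ botS = botS := by
  apply le_antisymm
  · have h := botS_le (ψ.symm botS)
    have := ψ.monotone h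
    rwa [OrderIso.apply_symm_apply] at this
  · exact botS_le _

lemma map_atomS {T : BASub α} (h : AtomS T) : AtomS (ψ T) := by
  constructor
  · intro he
    apply h.1
    have : T = ψ.symm botS := by rw [← he, OrderIso.symm_apply_apply]
    rw [this, map_botS]
  · intro z hz hle
    have h1 : ψ.symm z ≤ T := by
      have := ψ.symm.monotone hle
      rwa [OrderIso.symm_apply_apply] at this
    have h2 : ψ.symm z ≠ botS := by
      intro he
      apply hz
      rw [← map_botS ψ, ← he, OrderIso.apply_symm_apply]
    have := h.2 _ h2 h1
    rw [← this, OrderIso.apply_symm_apply]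

lemma map_atS {x : α} (hx : Nt x) : ∃ x', Nt x' ∧ ψ (atS x) = atS x' := by
  have := atomS_iff.1 (map_atomS ψ (atomS_iff.2 ⟨x, hx, rfl⟩))
  obtain ⟨x', hx', he⟩ := this
  exact ⟨x', hx', he⟩

lemma map_atS_symm {x : α} {x' : α'} (h : ψ (atS x) = atS x') : ψ.symm (atS x') = atS x := by
  rw [← h, OrderIso.symm_apply_apply]

lemma map_genS_pair {x y : α} {x' y' : α'} (hx' : ψ (atS x) = atS x')
    (hy' : ψ (atS y) = atS y') :
    ψ (genS ({x, y} : Set α)) = genS ({x', y'} : Set α') := by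
  have hlub : IsLUB {atS x', atS y'} (ψ (genS ({x, y} : Set α))) := by
    constructor
    · rintro T (rfl|rfl)
      · rw [← hx']; exact ψ.monotone (atS_le_genS (by simp))
      · rw [← hy']; exact ψ.monotone (atS_le_genS (by simp))
    · intro U hU
      have h1 : atS x ≤ ψ.symm U := by
        rw [← map_atS_symm ψ hx']
        exact ψ.symm.monotone (hU (by simp))
      have h2 : atS y ≤ ψ.symm U := by
        rw [← map_atS_symm ψ hy']
        exact ψ.symm.monotone (hU (by simp))
      have : genS ({x, y} : Set α) ≤ ψ.symm U := by
        rw [genS_le_iff]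
        rintro z (rfl|rfl)
        · exact atS_le_iff.1 h1
        · exact atS_le_iff.1 h2
      have := ψ.monotone this
      rwa [OrderIso.apply_symm_apply] at this
  exact hlub.unique (isLUB_genS_pair x' y')

lemma map_genS_triple {x q y : α} {x' q' y' : α'} (hx' : ψ (atS x) = atS x')
    (hq' : ψ (atS q) = atS q') (hy' : ψ (atS y) = atS y') :
    ψ (genS ({x, q, y} : Set α)) = genS ({x', q', y'} : Set α') := by
  have hlub : IsLUB {atS x', atS q', atS y'} (ψ (genS ({x, q, y} : Set α))) := by
    constructor
    · rintro T (rfl|rfl|rfl)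
      · rw [← hx']; exact ψ.monotone (atS_le_genS (by simp))
      · rw [← hq']; exact ψ.monotone (atS_le_genS (by simp))
      · rw [← hy']; exact ψ.monotone (atS_le_genS (by simp))
    · intro U hU
      have h1 : atS x ≤ ψ.symm U := by
        rw [← map_atS_symm ψ hx']
        exact ψ.symm.monotone (hU (by simp))
      have h2 : atS q ≤ ψ.symm U := by
        rw [← map_atS_symm ψ hq']
        exact ψ.symm.monotone (hU (by simp))
      have h3 : atS y ≤ ψ.symm U := by
        rw [← map_atS_symm ψ hy']
        exact ψ.symm.monotone (hU (by simp))
      have : genS ({x, q, y} : Set α) ≤ ψ.symm U := by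
        rw [genS_le_iff]
        rintro z (rfl|rfl|rfl)
        · exact atS_le_iff.1 h1
        · exact atS_le_iff.1 h2
        · exact atS_le_iff.1 h3
      have := ψ.monotone this
      rwa [OrderIso.apply_symm_apply] at this
  exact hlub.unique (isLUB_genS_triple x' q' y')

lemma compLat_map {x y : α} {x' y' : α'} (hx' : ψ (atS x) = atS x')
    (hy' : ψ (atS y) = atS y') (h : compLat x' y') : compLat x y := by
  rintro ⟨T1, T2, T3, T4, ⟨a1, a2, a3, a4⟩, ⟨l1, l2, l3, l4⟩, n12, n13, n14, n23, n24, n34⟩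
  apply h
  have hg := map_genS_pair ψ hx' hy'
  refine ⟨ψ T1, ψ T2, ψ T3, ψ T4,
    ⟨map_atomS ψ a1, map_atomS ψ a2, map_atomS ψ a3, map_atomS ψ a4⟩,
    ⟨hg ▸ ψ.monotone l1, hg ▸ ψ.monotone l2, hg ▸ ψ.monotone l3, hg ▸ ψ.monotone l4⟩,
    ?_, ?_, ?_, ?_, ?_, ?_⟩ <;>
    simp only [ne_eq, EmbeddingLike.apply_eq_iff_eq] <;> assumption

lemma compLat_transfer {x y : α} {x' y' : α'} (hx' : ψ (atS x) = atS x')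
    (hy' : ψ (atS y) = atS y') : compLat x y ↔ compLat x' y' := by
  constructor
  · intro h
    exact compLat_map ψ.symm (map_atS_symm ψ hx') (map_atS_symm ψ hy') h
  · exact compLat_map ψ hx' hy'

lemma rel_transfer {x y : α} {x' y' : α'} (hx : Nt x) (hy : Nt y) (hx' : Nt x') (hy' : Nt y')
    (hne : atS x ≠ atS y)
    (hmx : ψ (atS x) = atS x') (hmy : ψ (atS y) = atS y') : rel x y ↔ rel x' y' := by
  have hne' : atS x' ≠ atS y' := by
    intro he
    apply hne
    rw [← map_atS_symm ψ hmx, ← map_atS_symm ψ hmy, he]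
  constructor
  · intro h
    exact rel_of_compLat hx' hy' hne' ((compLat_transfer ψ hmx hmy).1 (compLat_of_rel hx hy h))
  · intro h
    exact rel_of_compLat hx hy hne ((compLat_transfer ψ hmx hmy).2 (compLat_of_rel hx' hy' h))

lemma midLat_map {q x y : α} {q' x' y' : α'} (hq : Nt q) (hq' : Nt q')
    (hmx : ψ (atS x) = atS x') (hmq : ψ (atS q) = atS q') (hmy : ψ (atS y) = atS y')
    (h : MidLat q x y) : MidLat q' x' y' := by
  obtain ⟨w, hw, hmem, hnrel⟩ := h
  obtain ⟨w', hw', hmw⟩ := map_atS ψ hw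
  have hne : atS w ≠ atS q := atS_ne_of_not_rel hnrel
  refine ⟨w', hw', ?_, ?_⟩
  · apply atS_le_iff.1
    have : atS w ≤ genS ({x, q, y} : Set α) := atS_le_iff.2 hmem
    have h2 := ψ.monotone this
    rwa [hmw, map_genS_triple ψ hmx hmq hmy] at h2
  · intro hr
    exact hnrel ((rel_transfer ψ hw hq hw' hq' hne hmw hmq).2 hr)

lemma rel_congr' {x1 x2 y1 y2 : α} (hx2 : Nt x2) (hy2 : Nt y2)
    (ex : atS x1 = atS x2) (ey : atS y1 = atS y2) : rel x1 y1 ↔ rel x2 y2 := by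
  rcases (atS_eq_iff hx2).1 ex with rfl|rfl <;> rcases (atS_eq_iff hy2).1 ey with rfl|rfl <;>
    simp [rel_compl_left, rel_compl_right]

lemma midLat_congr' {q1 q2 x1 x2 y1 y2 : α} (hq2 : Nt q2) (hx2 : Nt x2) (hy2 : Nt y2)
    (eq : atS q1 = atS q2) (ex : atS x1 = atS x2) (ey : atS y1 = atS y2) :
    MidLat q1 x1 y1 ↔ MidLat q2 x2 y2 := by
  rcases (atS_eq_iff hq2).1 eq with rfl|rfl <;> rcases (atS_eq_iff hx2).1 ex with rfl|rfl <;>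
    rcases (atS_eq_iff hy2).1 ey with rfl|rfl <;>
    simp [midLat_compl_left, midLat_compl_mid, midLat_compl_right]

end Transfer

section Main

variable {α : Type*} [BooleanAlgebra α] {α' : Type*} [BooleanAlgebra α']

/-- the defining property of the induced map -/
def Good (ψ : BASub α ≃o BASub α') (a : α) (c : α') : Prop :=
  Nt a ∧ Nt c ∧ ψ (atS a) = atS c ∧ ψ (dS a) ≤ dS c ∧ ψ (dS aᶜ) ≤ dS cᶜ

variable (ψ : BASub α ≃o BASub α')

lemma map_dS_le_iff {X : BASub α} {c' : α'} :
    ψ X ≤ dS c' ↔ ∀ x, Nt x → x ∈ (X : Set α) → ψ (atS x) ≤ dS c' := by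
  constructor
  · intro h x hx hmem
    exact le_trans (ψ.monotone (atS_le_iff.2 hmem)) h
  · intro h
    rw [le_iff]
    intro z hz
    by_cases hzb : z = ⊥
    · rw [hzb]; exact Or.inl bot_le
    by_cases hzt : z = ⊤
    · rw [hzt]; exact Or.inr le_top
    have hzn : Nt z := ⟨hzb, hzt⟩
    obtain ⟨x, hx, hxe⟩ := map_atS ψ.symm hzn
    have hx_le : x ∈ (X : Set α) := by
      apply atS_le_iff.1
      rw [← hxe]
      have := ψ.symm.monotone (atS_le_iff.2 hz : atS z ≤ ψ X)
      rwa [OrderIso.symm_apply_apply] at this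
    have h2 := h x hx hx_le
    have h3 : ψ (atS x) = atS z := by
      rw [← hxe, OrderIso.apply_symm_apply]
    rw [h3] at h2
    exact atS_le_iff.1 h2 |>.elim (fun h => Or.inl h) Or.inr

lemma good_compl {a : α} {c : α'} (h : Good ψ a c) : Good ψ aᶜ cᶜ := by
  obtain ⟨ha, hc, h1, h2, h3⟩ := h
  refine ⟨ha.compl, hc.compl, ?_, ?_, ?_⟩
  · rw [atS_compl, h1, atS_compl]
  · exact h3
  · rwa [compl_compl, compl_compl]

lemma atS_bot : atS (⊥ : α) = botS := by
  apply Subtype.ext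
  show ({⊥, ⊤, ⊥, ⊥ᶜ} : Set α) = {⊥, ⊤}
  ext z; simp

lemma atS_top : atS (⊤ : α) = botS := by
  apply Subtype.ext
  show ({⊥, ⊤, ⊤, ⊤ᶜ} : Set α) = {⊥, ⊤}
  ext z; simp; tauto

lemma nt_of_map_atS {x : α} {x' : α'} (hx : Nt x) (hmx : ψ (atS x) = atS x') : Nt x' := by
  by_contra hc
  have hb : atS x' = botS := by
    rcases not_and_or.1 hc with h|h
    · push_neg at h; rw [h, atS_bot]
    · push_neg at h; rw [h, atS_top]
  apply atS_ne_botS hx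
  rw [← map_atS_symm ψ hmx, hb, map_botS]

lemma atS_ne_map {a x : α} {c0 x' : α'} (hm0 : ψ (atS a) = atS c0)
    (hmx : ψ (atS x) = atS x') (hne : atS x ≠ atS a) : atS x' ≠ atS c0 := by
  intro he
  apply hne
  rw [← map_atS_symm ψ hmx, ← map_atS_symm ψ hm0, he]

lemma side_total {a x : α} {c0 : α'} (ha : Nt a) (hc0 : Nt c0) (hm0 : ψ (atS a) = atS c0)
    (hx : Nt x) (hrel : rel x a) :
    ψ (atS x) ≤ dS c0 ∨ ψ (atS x) ≤ dS c0ᶜ := by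
  obtain ⟨x', hx', hmx⟩ := map_atS ψ hx
  by_cases hne : atS x = atS a
  · left
    rw [hne, hm0]
    exact atS_le_dS_self c0
  have hrel' : rel x' c0 := (rel_transfer ψ hx ha hx' hc0 hne hmx hm0).1 hrel
  rw [hmx]
  rcases hrel' with h|h|h|h
  · exact Or.inl (atS_le_dS.2 (Or.inl h))
  · exact Or.inr (atS_le_dS.2 (Or.inr (compl_le_compl h)))
  · exact Or.inr (atS_le_dS.2 (Or.inl h))
  · exact Or.inl (atS_le_dS.2 (Or.inr (compl_le_iff_compl_le.2 h)))

lemma side_not_both {a x : α} {c0 : α'} (hc0 : Nt c0) (hm0 : ψ (atS a) = atS c0)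
    (hx : Nt x) (hne : atS x ≠ atS a)
    (h1 : ψ (atS x) ≤ dS c0) (h2 : ψ (atS x) ≤ dS c0ᶜ) : False := by
  obtain ⟨x', hx', hmx⟩ := map_atS ψ hx
  rw [hmx] at h1 h2
  exact atS_ne_map ψ hm0 hmx hne (atS_eq_of_le_both_dS hx' hc0 h1 h2)

/-- extract an oriented representative from a side condition -/
lemma side_rep {x : α} (hx : Nt x) {x' : α'} (hmx : ψ (atS x) = atS x') {c : α'}
    (h : ψ (atS x) ≤ dS c) : ∃ u, Nt u ∧ atS u = atS x' ∧ u ≤ c := by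
  rw [hmx, atS_le_dS] at h
  have hx' : Nt x' := nt_of_map_atS ψ hx hmx
  rcases h with h|h
  · exact ⟨x', hx', rfl, h⟩
  · exact ⟨x'ᶜ, hx'.compl, atS_compl x', h⟩

lemma side_same_claim {a x y : α} {c0 : α'} (ha : Nt a) (hc0 : Nt c0)
    (hm0 : ψ (atS a) = atS c0) (hx : Nt x) (hy : Nt y)
    (hnex : atS x ≠ atS a) (hney : atS y ≠ atS a) (hnexy : atS x ≠ atS y)
    (hlex : x ≤ a) (hley : y ≤ a)
    (hPx : ψ (atS x) ≤ dS c0) (hQy : ψ (atS y) ≤ dS c0ᶜ) : False := by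
  obtain ⟨x', hx', hmx⟩ := map_atS ψ hx
  obtain ⟨y', hy', hmy⟩ := map_atS ψ hy
  obtain ⟨u, hu, hau, hule⟩ := side_rep ψ hx hmx hPx
  obtain ⟨v, hv, hav, hvle⟩ := side_rep ψ hy hmy hQy
  have hnex' : atS x' ≠ atS c0 := atS_ne_map ψ hm0 hmx hnex
  have hney' : atS y' ≠ atS c0 := atS_ne_map ψ hm0 hmy hney
  by_cases hrel : rel x y
  · have hnomid : ¬ MidLat a x y := not_midLat_of_below hlex hley
    apply hnomid
    have huc : u < c0 := lt_of_le_of_ne hule (by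
      intro he
      exact hnex' (by rw [← hau, he]))
    have hcv : c0 < vᶜ := by
      have h1 : c0 ≤ vᶜ := by
        rw [← compl_compl c0]
        exact compl_le_compl hvle
      refine lt_of_le_of_ne h1 (fun he => hney' ?_)
      rw [← hav, ← atS_compl v, ← he]
    have hmid : MidLat c0 u vᶜ := midLat_of_chain huc hcv hu hc0 hv.compl
    have hmid' : MidLat c0 x' y' :=
      (midLat_congr' hc0 hx' hy' rfl hau (by rw [atS_compl]; exact hav)).1 hmid
    exact midLat_map ψ.symm hc0 ha (map_atS_symm ψ hmx) (map_atS_symm ψ hm0)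
      (map_atS_symm ψ hmy) hmid'
  · apply hrel
    have hrel' : rel u v := Or.inr (Or.inr (Or.inl (le_trans hule (by
      rw [← compl_compl c0] at hvle ⊢
      exact le_compl_comm.1 hvle))))
    have hrelxy' : rel x' y' := (rel_congr' hx' hy' hau hav).1 hrel'
    exact (rel_transfer ψ hx hy hx' hy' hnexy hmx hmy).2 hrelxy'

lemma side_same {a x y : α} {c0 : α'} (ha : Nt a) (hc0 : Nt c0)
    (hm0 : ψ (atS a) = atS c0) (hx : Nt x) (hy : Nt y)
    (hnex : atS x ≠ atS a) (hney : atS y ≠ atS a)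
    (hlex : x ≤ a) (hley : y ≤ a) :
    (ψ (atS x) ≤ dS c0 ↔ ψ (atS y) ≤ dS c0) := by
  by_cases hxy : atS x = atS y
  · rw [hxy]
  constructor
  · intro hPx
    rcases side_total ψ ha hc0 hm0 hy (Or.inl hley) with h|h
    · exact h
    · exact absurd (side_same_claim ψ ha hc0 hm0 hx hy hnex hney hxy hlex hley hPx h) not_false
  · intro hPy
    rcases side_total ψ ha hc0 hm0 hx (Or.inl hlex) with h|h
    · exact h
    · exact absurd (side_same_claim ψ ha hc0 hm0 hy hx hney hnex (Ne.symm hxy) hley hlex hPy h)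
        not_false

lemma side_cross {a x y : α} {c0 : α'} (ha : Nt a) (hc0 : Nt c0)
    (hm0 : ψ (atS a) = atS c0) (hx : Nt x) (hy : Nt y)
    (hnex : atS x ≠ atS a) (hney : atS y ≠ atS a)
    (hlex : x ≤ a) (hley : y ≤ aᶜ) :
    (ψ (atS x) ≤ dS c0 ↔ ψ (atS y) ≤ dS c0ᶜ) := by
  have hnexy : atS x ≠ atS y := by
    intro he
    rcases (atS_eq_iff hy).1 he with rfl|rfl
    · exact hx.1 (le_bot_iff.1 ((le_inf hlex hley).trans (le_of_eq inf_compl_eq_bot)))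
    · have hax : a ≤ x := by
        have := compl_le_compl hley
        rwa [compl_compl, compl_compl] at this
      exact hnex (by rw [le_antisymm hlex hax])
  obtain ⟨x', hx', hmx⟩ := map_atS ψ hx
  obtain ⟨y', hy', hmy⟩ := map_atS ψ hy
  have hmid : MidLat a x y := by
    rw [← midLat_compl_right]
    apply midLat_of_chain _ _ hx ha hy.compl
    · refine lt_of_le_of_ne hlex (fun he => hnex (by rw [he]))
    · refine lt_of_le_of_ne (le_compl_comm.1 hley) (fun he => hney ?_)
      rw [← compl_compl y, ← he, atS_compl]
  have hmid' : MidLat c0 x' y' := midLat_map ψ ha hc0 hmx hm0 hmy hmid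
  have claim1 : ¬ (ψ (atS x) ≤ dS c0 ∧ ψ (atS y) ≤ dS c0) := by
    rintro ⟨hPx, hPy⟩
    obtain ⟨u, hu, hau, hule⟩ := side_rep ψ hx hmx hPx
    obtain ⟨v, hv, hav, hvle⟩ := side_rep ψ hy hmy hPy
    exact not_midLat_of_below hule hvle ((midLat_congr' hc0 hu hv rfl hau.symm hav.symm).1 hmid')
  have claim2 : ¬ (ψ (atS x) ≤ dS c0ᶜ ∧ ψ (atS y) ≤ dS c0ᶜ) := by
    rintro ⟨hQx, hQy⟩
    obtain ⟨u, hu, hau, hule⟩ := side_rep ψ hx hmx hQx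
    obtain ⟨v, hv, hav, hvle⟩ := side_rep ψ hy hmy hQy
    apply not_midLat_of_below hule hvle
    exact (midLat_congr' hc0.compl hu hv (atS_compl c0).symm hau.symm hav.symm).1 hmid'
  constructor
  · intro hPx
    rcases side_total ψ ha hc0 hm0 hy (Or.inr (Or.inr (Or.inl hley))) with h|h
    · exact absurd ⟨hPx, h⟩ claim1
    · exact h
  · intro hQy
    rcases side_total ψ ha hc0 hm0 hx (Or.inl hlex) with h|h
    · exact h
    · exact absurd ⟨h, hQy⟩ claim2

lemma good_exists_aux {a x0 : α} (ha : Nt a) (hx0 : Nt x0) (hne0 : atS x0 ≠ atS a)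
    (hle0 : x0 ≤ a) : ∃ c, Good ψ a c := by
  obtain ⟨c0, hc0, hm0⟩ := map_atS ψ ha
  have repA : ∀ z, Nt z → z ∈ (dS a : Set α) → atS z ≠ atS a →
      ∃ w, Nt w ∧ atS w = atS z ∧ atS w ≠ atS a ∧ w ≤ a := by
    intro z hz hmem hne
    rcases mem_dS.1 hmem with h|h
    · exact ⟨z, hz, rfl, hne, h⟩
    · refine ⟨zᶜ, hz.compl, atS_compl z, by rwa [atS_compl], compl_le_iff_compl_le.1 h⟩
  have repB : ∀ z, Nt z → z ∈ (dS aᶜ : Set α) → atS z ≠ atS a →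
      ∃ w, Nt w ∧ atS w = atS z ∧ atS w ≠ atS a ∧ w ≤ aᶜ := by
    intro z hz hmem hne
    rcases mem_dS.1 hmem with h|h
    · exact ⟨z, hz, rfl, hne, h⟩
    · rw [compl_compl] at h
      exact ⟨zᶜ, hz.compl, atS_compl z, by rwa [atS_compl], compl_le_compl h⟩
  by_cases hP : ψ (atS x0) ≤ dS c0
  · refine ⟨c0, ha, hc0, hm0, ?_, ?_⟩
    · rw [map_dS_le_iff]
      intro z hz hmem
      by_cases hne : atS z = atS a
      · rw [hne, hm0]; exact atS_le_dS_self c0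
      obtain ⟨w, hw, hwz, hwa, hwle⟩ := repA z hz hmem hne
      rw [← hwz]
      exact (side_same ψ ha hc0 hm0 hw hx0 hwa hne0 hwle hle0).2 hP
    · rw [map_dS_le_iff]
      intro z hz hmem
      by_cases hne : atS z = atS a
      · rw [hne, hm0]
        exact atS_le_dS.2 (Or.inr le_rfl)
      obtain ⟨w, hw, hwz, hwa, hwle⟩ := repB z hz hmem hne
      rw [← hwz]
      exact (side_cross ψ ha hc0 hm0 hx0 hw hne0 hwa hle0 hwle).1 hP
  · refine ⟨c0ᶜ, ha, hc0.compl, by rw [atS_compl]; exact hm0, ?_, ?_⟩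
    · rw [map_dS_le_iff]
      intro z hz hmem
      by_cases hne : atS z = atS a
      · rw [hne, hm0]
        exact atS_le_dS.2 (Or.inr le_rfl)
      obtain ⟨w, hw, hwz, hwa, hwle⟩ := repA z hz hmem hne
      rw [← hwz]
      rcases side_total ψ ha hc0 hm0 hw (Or.inl hwle) with h|h
      · exact absurd ((side_same ψ ha hc0 hm0 hw hx0 hwa hne0 hwle hle0).1 h) hP
      · exact h
    · rw [compl_compl, map_dS_le_iff]
      intro z hz hmem
      by_cases hne : atS z = atS a
      · rw [hne, hm0]; exact atS_le_dS_self c0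
      obtain ⟨w, hw, hwz, hwa, hwle⟩ := repB z hz hmem hne
      rw [← hwz]
      rcases side_total ψ ha hc0 hm0 hw (Or.inr (Or.inr (Or.inl hwle))) with h|h
      · exact h
      · exact absurd ((side_cross ψ ha hc0 hm0 hx0 hw hne0 hwa hle0 hwle).2 h) hP

lemma all_atS_eq {a : α} (ha : Nt a)
    (cA : ∀ x, Nt x → x ≤ a → x = a) (cB : ∀ y, Nt y → y ≤ aᶜ → y = aᶜ) :
    ∀ z, Nt z → atS z = atS a := by
  intro z hz
  by_cases hza : z ⊓ a = ⊥
  · have : z ≤ aᶜ := le_compl_comm.1 (le_compl_of_inf_eq_bot hza)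
    rw [cB z hz this, atS_compl]
  · have hm : Nt (z ⊓ a) := by
      refine ⟨hza, fun ht => ha.2 (top_le_iff.1 (ht ▸ inf_le_right))⟩
    have h1 : z ⊓ a = a := cA (z ⊓ a) hm inf_le_right
    have h2 : a ≤ z := le_trans (le_of_eq h1.symm) inf_le_left
    have h3 : zᶜ ≤ aᶜ := compl_le_compl h2
    by_cases hzc : z = a
    · rw [hzc]
    · have hznc : Nt zᶜ := hz.compl
      have := cB zᶜ hznc h3
      have hz_eq : z = a := by
        have := congrArg compl this
        rwa [compl_compl, compl_compl] at this
      rw [hz_eq]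

/-- two distinct atom classes -/
def TwoClasses (α : Type*) [BooleanAlgebra α] : Prop :=
  ∃ u v : α, Nt u ∧ Nt v ∧ atS u ≠ atS v

lemma good_exists (H2 : TwoClasses α) {a : α} (ha : Nt a) : ∃ c, Good ψ a c := by
  by_cases h1 : ∃ x, Nt x ∧ atS x ≠ atS a ∧ x ≤ a
  · obtain ⟨x, hx, hne, hle⟩ := h1
    exact good_exists_aux ψ ha hx hne hle
  by_cases h2 : ∃ y, Nt y ∧ atS y ≠ atS a ∧ y ≤ aᶜ
  · obtain ⟨y, hy, hne, hle⟩ := h2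
    have hne' : atS y ≠ atS aᶜ := by rwa [atS_compl]
    obtain ⟨c, hc⟩ := good_exists_aux ψ ha.compl hy hne' hle
    refine ⟨cᶜ, ?_⟩
    have := good_compl ψ hc
    rwa [compl_compl] at this
  · exfalso
    push_neg at h1 h2
    have cA : ∀ x, Nt x → x ≤ a → x = a := by
      intro x hx hle
      by_cases hne : atS x = atS a
      · rcases (atS_eq_iff hx).1 hne.symm with rfl|rfl
        · rfl
        · exfalso
          have : aᶜ = ⊥ := eq_bot_of_le_compl (by rwa [compl_compl])
          exact ha.2 (by rwa [compl_eq_bot] at this)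
      · exact absurd hle (h1 x hx hne)
    have cB : ∀ y, Nt y → y ≤ aᶜ → y = aᶜ := by
      intro y hy hle
      by_cases hne : atS y = atS a
      · rcases (atS_eq_iff hy).1 hne.symm with rfl|rfl
        · exact absurd (eq_bot_of_le_compl hle) hy.1
        · rfl
      · exact absurd hle (h2 y hy hne)
    obtain ⟨u, v, hu, hv, huv⟩ := H2
    exact huv ((all_atS_eq ha cA cB u hu).trans (all_atS_eq ha cA cB v hv).symm)

lemma good_unique (H2 : TwoClasses α) {a : α} {c c' : α'}
    (h : Good ψ a c) (h' : Good ψ a c') : c = c' := by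
  obtain ⟨ha, hc, hm, hd1, hd2⟩ := h
  obtain ⟨-, hc', hm', hd1', hd2'⟩ := h'
  have hat : atS c = atS c' := by rw [← hm, ← hm']
  rcases (atS_eq_iff hc').1 hat with rfl|rfl
  · rfl
  exfalso
  have cA : ∀ x, Nt x → x ≤ a → x = a := by
    intro x hx hle
    by_cases hne : atS x = atS a
    · rcases (atS_eq_iff hx).1 hne.symm with rfl|rfl
      · rfl
      · exfalso
        have : aᶜ = ⊥ := eq_bot_of_le_compl (by rwa [compl_compl])
        exact ha.2 (by rwa [compl_eq_bot] at this)
    · exfalso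
      have hx1 : ψ (atS x) ≤ dS c := le_trans (ψ.monotone (atS_le_dS.2 (Or.inl hle))) hd1
      have hx2 : ψ (atS x) ≤ dS cᶜ := le_trans (ψ.monotone (atS_le_dS.2 (Or.inl hle))) hd1'
      exact side_not_both ψ hc hm hx hne hx1 hx2
  have cB : ∀ y, Nt y → y ≤ aᶜ → y = aᶜ := by
    intro y hy hle
    by_cases hne : atS y = atS a
    · rcases (atS_eq_iff hy).1 hne.symm with rfl|rfl
      · exact absurd (eq_bot_of_le_compl hle) hy.1
      · rfl
    · exfalso
      have hy2' : ψ (atS y) ≤ dS cᶜᶜ :=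
        le_trans (ψ.monotone (atS_le_dS.2 (Or.inl hle))) hd2'
      rw [compl_compl] at hy2'
      have hy1 : ψ (atS y) ≤ dS cᶜ := le_trans (ψ.monotone (atS_le_dS.2 (Or.inl hle))) hd2
      exact side_not_both ψ hc hm hy hne hy2' hy1
  obtain ⟨u, v, hu, hv, huv⟩ := H2
  exact huv ((all_atS_eq ha cA cB u hu).trans (all_atS_eq ha cA cB v hv).symm)

lemma good_mono (H2 : TwoClasses α) {a b : α} {c d : α'}
    (h : Good ψ a c) (h' : Good ψ b d) (hab : a ≤ b) : c ≤ d := by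
  by_cases he : atS a = atS b
  · rcases (atS_eq_iff h'.1).1 he with rfl|rfl
    · exact le_of_eq (good_unique ψ H2 h h')
    · exact absurd (eq_bot_of_le_compl hab) h.1.1
  · have h1 : atS c ≤ dS d := by
      rw [← h.2.2.1]
      exact le_trans (ψ.monotone (atS_le_dS.2 (Or.inl hab))) h'.2.2.2.1
    have h2 : atS d ≤ dS cᶜ := by
      rw [← h'.2.2.1]
      exact le_trans (ψ.monotone (atS_le_dS.2 (Or.inr (compl_le_compl hab)))) h.2.2.2.2
    rcases atS_le_dS.1 h1 with hcd|hcd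
    · exact hcd
    · rcases atS_le_dS.1 h2 with hdc|hdc
      · exfalso
        apply he
        have : d = cᶜ := le_antisymm hdc hcd
        have hatdc : atS d = atS c := by rw [this, atS_compl]
        rw [← map_atS_symm ψ h.2.2.1, ← map_atS_symm ψ h'.2.2.1, hatdc]
      · exact compl_le_compl_iff_le.1 hdc

lemma rev_dS {a : α} {c : α'} (h : Good ψ a c) : ψ.symm (dS c) ≤ dS a := by
  obtain ⟨ha, hc, hm, hd1, hd2⟩ := h
  rw [map_dS_le_iff]
  intro x' hx' hmem
  by_cases he : atS x' = atS c
  · rw [he, map_atS_symm ψ hm]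
    exact atS_le_dS_self a
  obtain ⟨x, hx, hmx⟩ := map_atS ψ.symm hx'
  rw [hmx]
  have hpsix : ψ (atS x) = atS x' := by
    rw [← hmx, OrderIso.apply_symm_apply]
  have hrel' : rel x' c := by
    rcases mem_dS.1 hmem with h|h
    · exact Or.inl h
    · exact Or.inr (Or.inr (Or.inr h))
  have hrel : rel x a := by
    have := rel_transfer ψ.symm hx' hc hx ha he hmx (map_atS_symm ψ hm)
    exact this.1 hrel'
  have hside : atS x ≤ dS a ∨ atS x ≤ dS aᶜ := by
    rcases hrel with h|h|h|h
    · exact Or.inl (atS_le_dS.2 (Or.inl h))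
    · exact Or.inr (atS_le_dS.2 (Or.inr (compl_le_compl h)))
    · exact Or.inr (atS_le_dS.2 (Or.inl h))
    · exact Or.inl (atS_le_dS.2 (Or.inr (compl_le_iff_compl_le.2 h)))
  rcases hside with h|h
  · exact h
  · exfalso
    have h1 : atS x' ≤ dS cᶜ := by
      rw [← hpsix]
      exact le_trans (ψ.monotone h) hd2
    have h2 : atS x' ≤ dS c := atS_le_iff.2 hmem
    exact he (atS_eq_of_le_both_dS hx' hc h2 h1)

lemma good_rev {a : α} {c : α'} (h : Good ψ a c) : Good ψ.symm c a := by
  refine ⟨h.2.1, h.1, map_atS_symm ψ h.2.2.1, rev_dS ψ h, ?_⟩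
  exact rev_dS ψ (good_compl ψ h)

lemma twoClasses_map (ψ : BASub α ≃o BASub α') (H2 : TwoClasses α) : TwoClasses α' := by
  obtain ⟨u, v, hu, hv, huv⟩ := H2
  obtain ⟨u', hu', hmu⟩ := map_atS ψ hu
  obtain ⟨v', hv', hmv⟩ := map_atS ψ hv
  refine ⟨u', v', hu', hv', fun he => huv ?_⟩
  rw [← map_atS_symm ψ hmu, ← map_atS_symm ψ hmv, he]

end Main

section Assemble

variable {α : Type*} [BooleanAlgebra α] {α' : Type*} [BooleanAlgebra α']

lemma orderIso_map_compl (g : α ≃o α') (c : α) : g cᶜ = (g c)ᶜ := by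
  have h1 : g c ⊓ g cᶜ = ⊥ := by
    rw [← map_inf, inf_compl_eq_bot, OrderIso.map_bot]
  have h2 : g c ⊔ g cᶜ = ⊤ := by
    rw [← map_sup, sup_compl_eq_top, OrderIso.map_top]
  exact ((IsCompl.of_eq h1 h2).compl_eq).symm

theorem main_case (hβ2 : TwoClasses α) (φ : BASub α ≃o BASub α') :
    ∃ f : α ≃o α',
      (∀ x : BASub α, (φ x : Set α') = f '' (x : Set α)) ∧
      (∀ g : α ≃o α', (∀ x : BASub α, (φ x : Set α') = g '' (x : Set α)) →
          ∀ c : α, g c = f c) := by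
  classical
  have hγ2 : TwoClasses α' := twoClasses_map φ hβ2
  have hbne : (⊥ : α) ≠ ⊤ := by
    obtain ⟨u, v, hu, _, _⟩ := hβ2
    intro h
    exact hu.1 (le_antisymm (h ▸ le_top) bot_le)
  have hbne' : (⊥ : α') ≠ ⊤ := by
    obtain ⟨u, v, hu, _, _⟩ := hγ2
    intro h
    exact hu.1 (le_antisymm (h ▸ le_top) bot_le)
  set F : α → α' := fun x => if hx : Nt x then (good_exists φ hβ2 hx).choose
    else if x = ⊥ then ⊥ else ⊤ with hF
  set G : α' → α := fun z => if hz : Nt z then (good_exists φ.symm hγ2 hz).choose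
    else if z = ⊥ then ⊥ else ⊤ with hG
  have FGood : ∀ x, (hx : Nt x) → Good φ x (F x) := by
    intro x hx
    simp only [hF, dif_pos hx]
    exact (good_exists φ hβ2 hx).choose_spec
  have GGood : ∀ z, (hz : Nt z) → Good φ.symm z (G z) := by
    intro z hz
    simp only [hG, dif_pos hz]
    exact (good_exists φ.symm hγ2 hz).choose_spec
  have F_bot : F ⊥ = ⊥ := by
    simp only [hF]
    rw [dif_neg (by intro h; exact h.1 rfl)]
    simp
  have F_top : F ⊤ = ⊤ := by
    simp only [hF]
    rw [dif_neg (by intro h; exact h.2 rfl), if_neg (Ne.symm hbne)]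
  have G_bot : G ⊥ = ⊥ := by
    simp only [hG]
    rw [dif_neg (by intro h; exact h.1 rfl)]
    simp
  have G_top : G ⊤ = ⊤ := by
    simp only [hG]
    rw [dif_neg (by intro h; exact h.2 rfl), if_neg (Ne.symm hbne')]
  have F_nt : ∀ x, (hx : Nt x) → Nt (F x) := fun x hx => (FGood x hx).2.1
  have G_nt : ∀ z, (hz : Nt z) → Nt (G z) := fun z hz => (GGood z hz).2.1
  have GF : ∀ x, G (F x) = x := by
    intro x
    by_cases hx : Nt x
    · have h1 : Good φ.symm (F x) x := good_rev φ (FGood x hx)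
      have h2 : Good φ.symm (F x) (G (F x)) := GGood (F x) (F_nt x hx)
      exact good_unique φ.symm hγ2 h2 h1
    · rcases not_and_or.1 hx with h|h
      · push_neg at h
        rw [h, F_bot, G_bot]
      · push_neg at h
        rw [h, F_top, G_top]
  have FG : ∀ z, F (G z) = z := by
    intro z
    by_cases hz : Nt z
    · have h1 : Good φ (G z) z := by
        have := good_rev φ.symm (GGood z hz)
        simpa using this
      have h2 : Good φ (G z) (F (G z)) := FGood (G z) (G_nt z hz)
      exact good_unique φ hβ2 h2 h1
    · rcases not_and_or.1 hz with h|h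
      · push_neg at h
        rw [h, G_bot, F_bot]
      · push_neg at h
        rw [h, G_top, F_top]
  have F_mono : ∀ a b : α, a ≤ b → F a ≤ F b := by
    intro a b hab
    by_cases ha : Nt a
    · by_cases hb : Nt b
      · exact good_mono φ hβ2 (FGood a ha) (FGood b hb) hab
      · rcases not_and_or.1 hb with h|h
        · push_neg at h
          subst h
          exact absurd (le_bot_iff.1 hab) ha.1
        · push_neg at h
          subst h
          rw [F_top]
          exact le_top
    · rcases not_and_or.1 ha with h|h
      · push_neg at h
        subst h
        rw [F_bot]
        exact bot_le
      · push_neg at h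
        subst h
        have : b = ⊤ := top_le_iff.1 hab
        subst this
        exact le_rfl
  have G_mono : ∀ a b : α', a ≤ b → G a ≤ G b := by
    intro a b hab
    by_cases ha : Nt a
    · by_cases hb : Nt b
      · exact good_mono φ.symm hγ2 (GGood a ha) (GGood b hb) hab
      · rcases not_and_or.1 hb with h|h
        · push_neg at h
          subst h
          exact absurd (le_bot_iff.1 hab) ha.1
        · push_neg at h
          subst h
          rw [G_top]
          exact le_top
    · rcases not_and_or.1 ha with h|h
      · push_neg at h
        subst h
        rw [G_bot]
        exact bot_le
      · push_neg at h
        subst h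
        have : b = ⊤ := top_le_iff.1 hab
        subst this
        exact le_rfl
  refine ⟨{ toFun := F, invFun := G, left_inv := GF, right_inv := FG,
            map_rel_iff' := ?_ }, ?_, ?_⟩
  · intro a b
    constructor
    · intro h
      have h' : F a ≤ F b := h
      have := G_mono _ _ h'
      rwa [GF, GF] at this
    · exact F_mono a b
  · -- image property
    intro X
    show (φ X : Set α') = F '' (X : Set α)
    ext z
    constructor
    · intro hz
      by_cases hzn : Nt z
      · obtain ⟨w, hw, hmw⟩ := map_atS φ.symm hzn
        have hwX : w ∈ (X : Set α) := by
          apply atS_le_iff.1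
          rw [← hmw]
          have := φ.symm.monotone (atS_le_iff.2 hz : atS z ≤ φ X)
          rwa [OrderIso.symm_apply_apply] at this
        have hFw : φ (atS w) = atS (F w) := (FGood w hw).2.2.1
        have hzw : atS (F w) = atS z := by
          rw [← hFw, ← hmw, OrderIso.apply_symm_apply]
        rcases (atS_eq_iff hzn).1 hzw with rfl|rfl
        · exact ⟨w, hwX, rfl⟩
        · refine ⟨wᶜ, X.2.2.2.2.2 w hwX, ?_⟩
          have hcompl : Good φ wᶜ (F w)ᶜ := good_compl φ (FGood w hw)
          have := good_unique φ hβ2 (FGood wᶜ hw.compl) hcompl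
          simp only [this]
      · rcases not_and_or.1 hzn with h|h
        · push_neg at h
          subst h
          exact ⟨⊥, X.2.1, F_bot⟩
        · push_neg at h
          subst h
          exact ⟨⊤, X.2.2.1, F_top⟩
    · rintro ⟨w, hwX, rfl⟩
      by_cases hw : Nt w
      · have hFw : φ (atS w) = atS (F w) := (FGood w hw).2.2.1
        apply atS_le_iff.1
        rw [← hFw]
        exact φ.monotone (atS_le_iff.2 hwX)
      · rcases not_and_or.1 hw with h|h
        · push_neg at h
          subst h
          rw [F_bot]
          exact (φ X).2.1
        · push_neg at h
          subst h
          rw [F_top]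
          exact (φ X).2.2.1
  · -- uniqueness
    intro g hg c
    show g c = F c
    by_cases hc : Nt c
    · have hgc : Nt (g c) := by
        constructor
        · intro h
          apply hc.1
          have : g c = g ⊥ := by rw [h, OrderIso.map_bot]
          exact g.injective this
        · intro h
          apply hc.2
          have : g c = g ⊤ := by rw [h, OrderIso.map_top]
          exact g.injective this
      have hGoodg : Good φ c (g c) := by
        refine ⟨hc, hgc, ?_, ?_, ?_⟩
        · apply Subtype.ext
          rw [hg (atS c)]
          show g '' {⊥, ⊤, c, cᶜ} = {⊥, ⊤, g c, (g c)ᶜ}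
          rw [← orderIso_map_compl g c]
          ext t
          simp only [Set.image_insert_eq, Set.image_singleton, Set.mem_insert_iff,
            Set.mem_singleton_iff, OrderIso.map_bot, OrderIso.map_top]
        · rw [le_iff]
          intro t ht
          rw [hg (dS c)] at ht
          obtain ⟨w, hwmem, rfl⟩ := ht
          rcases mem_dS.1 hwmem with h|h
          · exact Or.inl (g.monotone h)
          · refine Or.inr ?_
            rw [← orderIso_map_compl g c]
            exact g.monotone h
        · rw [le_iff]
          intro t ht
          rw [hg (dS cᶜ)] at ht
          obtain ⟨w, hwmem, rfl⟩ := ht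
          rcases mem_dS.1 hwmem with h|h
          · left
            rw [← orderIso_map_compl g c]
            exact g.monotone h
          · right
            rw [compl_compl] at h ⊢
            exact g.monotone h
      exact good_unique φ hβ2 hGoodg (FGood c hc)
    · rcases not_and_or.1 hc with h|h
      · push_neg at h
        subst h
        rw [F_bot, OrderIso.map_bot]
      · push_neg at h
        subst h
        rw [F_top, OrderIso.map_top]

theorem one_class_case {a : α} (ha : Nt a) (hone : ∀ x, Nt x → atS x = atS a)
    (φ : BASub α ≃o BASub α') :
    ∃ f : α ≃o α',
      (∀ x : BASub α, (φ x : Set α') = f '' (x : Set α)) ∧ Nat.card α = 4 := by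
  classical
  have hbne : (⊥ : α) ≠ ⊤ := fun h => ha.1 (le_bot_iff.1 (h ▸ le_top))
  have classify : ∀ x : α, x = ⊥ ∨ x = ⊤ ∨ x = a ∨ x = aᶜ := by
    intro x
    by_cases hx : Nt x
    · rcases (atS_eq_iff hx).1 (hone x hx).symm with h|h
      · exact Or.inr (Or.inr (Or.inl h))
      · exact Or.inr (Or.inr (Or.inr h))
    · rcases not_and_or.1 hx with h|h
      · push_neg at h; exact Or.inl h
      · push_neg at h; exact Or.inr (Or.inl h)
  have hac : a ≠ aᶜ := by
    intro h
    exact ha.1 (eq_bot_of_le_compl (le_of_eq h))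
  obtain ⟨c, hc, hmc⟩ := map_atS φ ha
  have hbne' : (⊥ : α') ≠ ⊤ := fun h => hc.1 (le_bot_iff.1 (h ▸ le_top))
  have honec : ∀ z, Nt z → atS z = atS c := by
    intro z hz
    obtain ⟨w, hw, hmw⟩ := map_atS φ.symm hz
    have h1 : atS w = atS a := hone w hw
    have h2 : atS z = φ (atS w) := by rw [← hmw, OrderIso.apply_symm_apply]
    rw [h2, h1, hmc]
  have classify' : ∀ z : α', z = ⊥ ∨ z = ⊤ ∨ z = c ∨ z = cᶜ := by
    intro z
    by_cases hz : Nt z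
    · rcases (atS_eq_iff hz).1 (honec z hz).symm with h|h
      · exact Or.inr (Or.inr (Or.inl h))
      · exact Or.inr (Or.inr (Or.inr h))
    · rcases not_and_or.1 hz with h|h
      · push_neg at h; exact Or.inl h
      · push_neg at h; exact Or.inr (Or.inl h)
  have hcc : c ≠ cᶜ := by
    intro h
    exact hc.1 (eq_bot_of_le_compl (le_of_eq h))
  have hcard : Nat.card α = 4 := by
    have e : α ≃ Fin 4 :=
      { toFun := fun x => if x = ⊥ then 0 else if x = ⊤ then 1 else if x = a then 2 else 3
        invFun := fun i => if i = 0 then ⊥ else if i = 1 then ⊤ else if i = 2 then a else aᶜ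
        left_inv := by
          intro x
          rcases classify x with rfl|rfl|rfl|rfl
          · simp
          · simp [Ne.symm hbne]
          · simp [ha.1, ha.2]
          · simp [ha.compl.1, ha.compl.2, Ne.symm hac]
        right_inv := by
          intro i
          fin_cases i
          · simp
          · simp [Ne.symm hbne]
          · simp [ha.1, ha.2]
          · simp [ha.compl.1, ha.compl.2, Ne.symm hac] }
    rw [Nat.card_congr e]
    simp
  have le4 : ∀ x y : α, x ≤ y ↔ (x = ⊥ ∨ y = ⊤ ∨ x = y) := by
    intro x y
    constructor
    · intro hxy
      rcases classify x with rfl|rfl|rfl|rfl <;> rcases classify y with rfl|rfl|rfl|rfl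
      · exact Or.inl rfl
      · exact Or.inl rfl
      · exact Or.inl rfl
      · exact Or.inl rfl
      · exact absurd (le_bot_iff.1 hxy).symm hbne
      · exact Or.inr (Or.inl rfl)
      · exact absurd (top_le_iff.1 hxy) ha.2
      · exact absurd (top_le_iff.1 hxy) ha.compl.2
      · exact absurd (le_bot_iff.1 hxy) ha.1
      · exact Or.inr (Or.inl rfl)
      · exact Or.inr (Or.inr rfl)
      · exact absurd (eq_bot_of_le_compl hxy) ha.1
      · exact absurd (le_bot_iff.1 hxy) ha.compl.1
      · exact Or.inr (Or.inl rfl)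
      · exact absurd (eq_bot_of_le_compl (by rwa [compl_compl])) ha.compl.1
      · exact Or.inr (Or.inr rfl)
    · rintro (rfl|rfl|rfl)
      · exact bot_le
      · exact le_top
      · exact le_rfl
  have le4' : ∀ x y : α', x ≤ y ↔ (x = ⊥ ∨ y = ⊤ ∨ x = y) := by
    intro x y
    constructor
    · intro hxy
      rcases classify' x with rfl|rfl|rfl|rfl <;> rcases classify' y with rfl|rfl|rfl|rfl
      · exact Or.inl rfl
      · exact Or.inl rfl
      · exact Or.inl rfl
      · exact Or.inl rfl
      · exact absurd (le_bot_iff.1 hxy).symm hbne'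
      · exact Or.inr (Or.inl rfl)
      · exact absurd (top_le_iff.1 hxy) hc.2
      · exact absurd (top_le_iff.1 hxy) hc.compl.2
      · exact absurd (le_bot_iff.1 hxy) hc.1
      · exact Or.inr (Or.inl rfl)
      · exact Or.inr (Or.inr rfl)
      · exact absurd (eq_bot_of_le_compl hxy) hc.1
      · exact absurd (le_bot_iff.1 hxy) hc.compl.1
      · exact Or.inr (Or.inl rfl)
      · exact absurd (eq_bot_of_le_compl (by rwa [compl_compl])) hc.compl.1
      · exact Or.inr (Or.inr rfl)
    · rintro (rfl|rfl|rfl)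
      · exact bot_le
      · exact le_top
      · exact le_rfl
  set F : α → α' := fun x => if x = ⊥ then ⊥ else if x = ⊤ then ⊤ else if x = a then c
    else cᶜ with hF
  set G : α' → α := fun z => if z = ⊥ then ⊥ else if z = ⊤ then ⊤ else if z = c then a
    else aᶜ with hG
  have F_bot : F ⊥ = ⊥ := by simp [hF]
  have F_top : F ⊤ = ⊤ := by simp [hF, Ne.symm hbne]
  have F_a : F a = c := by simp [hF, ha.1, ha.2]
  have F_ac : F aᶜ = cᶜ := by simp [hF, ha.compl.1, ha.compl.2, Ne.symm hac]
  have G_bot : G ⊥ = ⊥ := by simp [hG]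
  have G_top : G ⊤ = ⊤ := by simp [hG, Ne.symm hbne']
  have G_c : G c = a := by simp [hG, hc.1, hc.2]
  have G_cc : G cᶜ = aᶜ := by simp [hG, hc.compl.1, hc.compl.2, Ne.symm hcc]
  have GF : ∀ x, G (F x) = x := by
    intro x
    rcases classify x with rfl|rfl|rfl|rfl
    · rw [F_bot, G_bot]
    · rw [F_top, G_top]
    · rw [F_a, G_c]
    · rw [F_ac, G_cc]
  have FG : ∀ z, F (G z) = z := by
    intro z
    rcases classify' z with rfl|rfl|rfl|rfl
    · rw [G_bot, F_bot]
    · rw [G_top, F_top]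
    · rw [G_c, F_a]
    · rw [G_cc, F_ac]
  have hFinj : ∀ x y, F x = F y → x = y := by
    intro x y h
    have := congrArg G h
    rwa [GF, GF] at this
  have F_iff : ∀ x y : α, F x ≤ F y ↔ x ≤ y := by
    intro x y
    rw [le4 x y, le4' (F x) (F y)]
    constructor
    · rintro (h|h|h)
      · exact Or.inl (by rw [← GF x, h, G_bot])
      · exact Or.inr (Or.inl (by rw [← GF y, h, G_top]))
      · exact Or.inr (Or.inr (hFinj _ _ h))
    · rintro (rfl|rfl|rfl)
      · exact Or.inl F_bot
      · exact Or.inr (Or.inl F_top)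
      · exact Or.inr (Or.inr rfl)
  refine ⟨{ toFun := F, invFun := G, left_inv := GF, right_inv := FG,
            map_rel_iff' := fun {x y} => F_iff x y }, ?_, hcard⟩
  intro X
  show (φ X : Set α') = F '' (X : Set α)
  by_cases haX : a ∈ (X : Set α)
  · have hXuniv : (X : Set α) = Set.univ := by
      apply Set.eq_univ_of_forall
      intro x
      rcases classify x with rfl|rfl|rfl|rfl
      · exact X.2.1
      · exact X.2.2.1
      · exact haX
      · exact X.2.2.2.2.2 a haX
    have hphi : (φ X : Set α') = Set.univ := by
      apply Set.eq_univ_of_forall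
      intro z
      have hcX : c ∈ (φ X : Set α') := by
        apply atS_le_iff.1
        rw [← hmc]
        exact φ.monotone (atS_le_iff.2 haX)
      rcases classify' z with rfl|rfl|rfl|rfl
      · exact (φ X).2.1
      · exact (φ X).2.2.1
      · exact hcX
      · exact (φ X).2.2.2.2.2 c hcX
    rw [hphi, hXuniv]
    apply (Set.eq_univ_of_forall _).symm
    intro z
    rcases classify' z with rfl|rfl|rfl|rfl
    · exact ⟨⊥, trivial, F_bot⟩
    · exact ⟨⊤, trivial, F_top⟩
    · exact ⟨a, trivial, F_a⟩
    · exact ⟨aᶜ, trivial, F_ac⟩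
  · have hXbot : X = botS := by
      apply Subtype.ext
      apply Set.eq_of_subset_of_subset
      · intro z hz
        rcases classify z with rfl|rfl|rfl|rfl
        · exact Or.inl rfl
        · exact Or.inr rfl
        · exact absurd hz haX
        · exfalso
          apply haX
          have := X.2.2.2.2.2 aᶜ hz
          rwa [compl_compl] at this
      · exact botS_le X
    rw [hXbot, map_botS φ]
    show ({⊥, ⊤} : Set α') = F '' {⊥, ⊤}
    rw [Set.image_insert_eq, Set.image_singleton, F_bot, F_top]

theorem triv_case (hb : (⊥ : α) ≠ ⊤) (hb' : (⊥ : α') ≠ ⊤)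
    (hno : ∀ x : α, x = ⊥ ∨ x = ⊤) (φ : BASub α ≃o BASub α') :
    ∃ f : α ≃o α',
      (∀ x : BASub α, (φ x : Set α') = f '' (x : Set α)) ∧
      (∀ g : α ≃o α', (∀ x : BASub α, (φ x : Set α') = g '' (x : Set α)) →
          ∀ c : α, g c = f c) := by
  classical
  have allbot : ∀ T : BASub α, T = botS := by
    intro T
    apply Subtype.ext
    apply Set.eq_of_subset_of_subset
    · intro z hz
      rcases hno z with rfl|rfl
      · exact Or.inl rfl
      · exact Or.inr rfl
    · exact botS_le T
  have hno' : ∀ z : α', z = ⊥ ∨ z = ⊤ := by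
    intro z
    by_cases hz : Nt z
    · exfalso
      have h1 : φ.symm (atS z) = φ.symm botS := by rw [allbot (φ.symm (atS z)), allbot (φ.symm botS)]
      have h2 : atS z = botS := φ.symm.injective h1
      exact atS_ne_botS hz h2
    · rcases not_and_or.1 hz with h|h
      · push_neg at h; exact Or.inl h
      · push_neg at h; exact Or.inr h
  set F : α → α' := fun x => if x = ⊥ then ⊥ else ⊤ with hF
  set G : α' → α := fun z => if z = ⊥ then ⊥ else ⊤ with hG
  have F_bot : F ⊥ = ⊥ := by simp [hF]
  have F_top : F ⊤ = ⊤ := by simp [hF, Ne.symm hb]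
  have G_bot : G ⊥ = ⊥ := by simp [hG]
  have G_top : G ⊤ = ⊤ := by simp [hG, Ne.symm hb']
  have GF : ∀ x, G (F x) = x := by
    intro x
    rcases hno x with rfl|rfl
    · rw [F_bot, G_bot]
    · rw [F_top, G_top]
  have FG : ∀ z, F (G z) = z := by
    intro z
    rcases hno' z with rfl|rfl
    · rw [G_bot, F_bot]
    · rw [G_top, F_top]
  have F_iff : ∀ x y : α, F x ≤ F y ↔ x ≤ y := by
    intro x y
    rcases hno x with rfl|rfl <;> rcases hno y with rfl|rfl
    · simp
    · rw [F_bot]; simp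
    · rw [F_top, F_bot]
      constructor
      · intro h
        exact absurd (le_bot_iff.1 h).symm hb'
      · intro h
        exact absurd (le_bot_iff.1 h).symm hb
    · simp
  refine ⟨{ toFun := F, invFun := G, left_inv := GF, right_inv := FG,
            map_rel_iff' := fun {x y} => F_iff x y }, ?_, ?_⟩
  · intro X
    show (φ X : Set α') = F '' (X : Set α)
    ext z
    constructor
    · intro hz
      rcases hno' z with rfl|rfl
      · exact ⟨⊥, X.2.1, F_bot⟩
      · exact ⟨⊤, X.2.2.1, F_top⟩
    · rintro ⟨w, hwX, rfl⟩
      rcases hno w with rfl|rfl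
      · rw [F_bot]; exact (φ X).2.1
      · rw [F_top]; exact (φ X).2.2.1
  · intro g hg c
    show g c = F c
    rcases hno c with rfl|rfl
    · rw [F_bot, OrderIso.map_bot]
    · rw [F_top, OrderIso.map_top]

end Assemble

end SachsAux

open SachsAux in
/-- Sachs' theorem: a lattice isomorphism `φ : Sub(B) → Sub(C)` between subalgebra
lattices of Boolean algebras is induced by a Boolean algebra isomorphism
`φ* : B → C`, i.e. `φ x = φ*[x]` for every subalgebra `x`; moreover `φ*` is unique
provided `B` does not have exactly four elements. -/
theorem stmt_11 {γ : Type*} [BooleanAlgebra γ] (hβ : (⊥ : β) ≠ ⊤) (hγ : (⊥ : γ) ≠ ⊤)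
    (φ : BASub β ≃o BASub γ) :
    ∃ f : β ≃o γ,
      (∀ x : BASub β, (φ x : Set γ) = f '' (x : Set β)) ∧
      (Nat.card β ≠ 4 →
        ∀ g : β ≃o γ, (∀ x : BASub β, (φ x : Set γ) = g '' (x : Set β)) →
          ∀ c : β, g c = f c) := by
  classical
  by_cases hT : TwoClasses β
  · obtain ⟨f, h1, h2⟩ := main_case hT φ
    exact ⟨f, h1, fun _ => h2⟩
  by_cases hN : ∃ a : β, Nt a
  · obtain ⟨a, ha⟩ := hN
    have hone : ∀ x, Nt x → atS x = atS a := by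
      intro x hx
      by_contra hne
      exact hT ⟨x, a, hx, ha, hne⟩
    obtain ⟨f, h1, hcard⟩ := one_class_case ha hone φ
    exact ⟨f, h1, fun h4 => absurd hcard h4⟩
  · push_neg at hN
    have hno : ∀ x : β, x = ⊥ ∨ x = ⊤ := by
      intro x
      rcases not_and_or.1 (hN x) with h|h
      · push_neg at h; exact Or.inl h
      · push_neg at h; exact Or.inr h
    obtain ⟨f, h1, h2⟩ := triv_case hβ hγ hno φ
    exact ⟨f, h1, fun _ => h2⟩
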